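/- Let u ∈ V(G) with u ≠ r, let u' be the parent of u in T, and let e = vv' ∈ E(F) be such that the graph (F + uu') − e contains no cycle. Then the following are equivalent: (a) (T − uu') + e is a spanning tree of G and (F − e) + uu' is a forest; (b) the edge uu' lies in the unique cycle of T + e; (c) up to relabelling v as v', v is a descendant of u in T and v' is not a descendant of u in T. -/

import Mathlib

/-!
Multigraphs are modelled by a finite vertex type `V`, a finite edge-index type `E`
and an incidence map `ends : E → Sym2 V` giving the two endpoints of each edge;
`Loopless` says no edge is a loop.  Parallel edges are allowed.
-/

open Classical

/-- `y` is reachable from `x` using (undirected) edges from the edge set `A`. -/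
def Reach {V E : Type} (ends : E → Sym2 V) (A : Set E) (x y : V) : Prop :=
  Relation.ReflTransGen (fun a b => ∃ e ∈ A, ends e = s(a, b)) x y

/-- The edge set `A` induces a forest (an acyclic graph) on `V`:
no edge of `A` has its endpoints joined by a walk avoiding that edge. -/
def IsForest {V E : Type} (ends : E → Sym2 V) (A : Set E) : Prop :=
  ∀ e ∈ A, ∀ x y : V, ends e = s(x, y) → ¬ Reach ends (A \ {e}) x y

/-- The edge set `A` induces a spanning tree: a forest connecting all vertices. -/
def IsSpanningTree {V E : Type} (ends : E → Sym2 V) (A : Set E) : Prop :=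
  IsForest ends A ∧ ∀ x y : V, Reach ends A x y

/-- `(S, A)` is a subgraph: every endpoint of an edge of `A` lies in `S`. -/
def IsSub {V E : Type} (ends : E → Sym2 V) (S : Set V) (A : Set E) : Prop :=
  ∀ e ∈ A, ∀ w ∈ ends e, w ∈ S

/-- The graph has no loops. -/
def Loopless {V E : Type} (ends : E → Sym2 V) : Prop :=
  ∀ e, ¬ (ends e).IsDiag

/-- The fractional arboricity of the graph is at most `c`:
every subgraph `H` with `v(H) ≥ 2` satisfies `e(H) ≤ c * (v(H) - 1)`. -/
def FracArbLE {V E : Type} (ends : E → Sym2 V) (c : ℚ) : Prop :=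
  ∀ (S : Set V) (A : Set E), IsSub ends S A → 2 ≤ S.ncard →
    (A.ncard : ℚ) ≤ c * ((S.ncard : ℚ) - 1)

/-- `(k,d)`-sparseness: every nonempty subgraph `H` satisfies
`(k+1)(k+d)·v(H) − (k+d+1)·e(H) − k² ≥ 0`. -/
def Sparse {V E : Type} (k d : ℕ) (ends : E → Sym2 V) : Prop :=
  ∀ (S : Set V) (A : Set E), IsSub ends S A → S.Nonempty →
    0 ≤ ((k : ℤ) + 1) * ((k : ℤ) + (d : ℤ)) * (S.ncard : ℤ)
        - ((k : ℤ) + (d : ℤ) + 1) * (A.ncard : ℤ) - (k : ℤ) ^ 2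

/-- `G` has no `(k+1)`-overfull subgraph: every nonempty subgraph `H`
satisfies `e(H) ≤ (k+1)(v(H) − 1)`. -/
def NoOverfull {V E : Type} (k : ℕ) (ends : E → Sym2 V) : Prop :=
  ∀ (S : Set V) (A : Set E), IsSub ends S A → S.Nonempty →
    (A.ncard : ℤ) ≤ ((k : ℤ) + 1) * ((S.ncard : ℤ) - 1)

/-- Vertex set of the connected component of `v` in the spanning subgraph with edge set `A`. -/
def compV {V E : Type} (ends : E → Sym2 V) (A : Set E) (v : V) : Set V :=
  {w | Reach ends A v w}

/-- Edge set of the connected component of `v` in the spanning subgraph with edge set `A`. -/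
def compE {V E : Type} (ends : E → Sym2 V) (A : Set E) (v : V) : Set E :=
  {e | e ∈ A ∧ ∀ w ∈ ends e, Reach ends A v w}

/-- A good `(k,d)`-decomposition: a partition of the edge set into `k+1` forests on `V`
such that every connected component of one of the forests has at most `d` edges. -/
def GoodDecomp {V E : Type} (k d : ℕ) (ends : E → Sym2 V) : Prop :=
  ∃ c : E → Fin (k + 1),
    (∀ i, IsForest ends {e | c e = i}) ∧
    ∃ i, ∀ v : V, (compE ends {e | c e = i} v).ncard ≤ d

/-- `a` is a descendant of `b` in the tree `T` rooted at `r`: the unique path in `T`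
from `a` to `r` passes through `b` (equivalently, `a = b` or `a` cannot reach `r`
in `T` after deleting all edges incident to `b`). -/
def Descendant {V E : Type} (ends : E → Sym2 V) (T : Set E) (r a b : V) : Prop :=
  a = b ∨ ¬ Reach ends {e | e ∈ T ∧ b ∉ ends e} a r

/-- The edge `t` lies on a cycle of the graph with edge set `A`:
its endpoints are joined by a walk in `A` avoiding `t`. -/
def OnACycle {V E : Type} (ends : E → Sym2 V) (A : Set E) (t : E) : Prop :=
  t ∈ A ∧ ∃ a b : V, ends t = s(a, b) ∧ Reach ends (A \ {t}) a b

section ExchangeAux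

variable {V E : Type} (ends : E → Sym2 V)

lemma reach_mono {A B : Set E} (h : A ⊆ B) {x y : V} (hxy : Reach ends A x y) :
    Reach ends B x y :=
  Relation.ReflTransGen.mono (fun _ _ ⟨f, hf, hfe⟩ => ⟨f, h hf, hfe⟩) _ _ hxy

lemma reach_symm {A : Set E} {x y : V} (h : Reach ends A x y) : Reach ends A y x := by
  have hs : Symmetric (fun a b => ∃ f ∈ A, ends f = s(a, b)) := by
    rintro a b ⟨f, hf, hfe⟩
    exact ⟨f, hf, by rw [hfe, Sym2.eq_swap]⟩
  exact (@Relation.ReflTransGen.stdSymm _ _ ⟨hs⟩).symm _ _ h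

lemma reach_step {A : Set E} {f : E} (hf : f ∈ A) {a b : V} (h : ends f = s(a, b)) :
    Reach ends A a b :=
  Relation.ReflTransGen.single ⟨f, hf, h⟩

lemma reach_remove {A : Set E} {t : E} {u u' : V} (htends : ends t = s(u, u'))
    {x y : V} (h : Reach ends A x y) :
    Reach ends (A \ {t}) x y ∨
    (Reach ends (A \ {t}) x u ∧ Reach ends (A \ {t}) u' y) ∨
    (Reach ends (A \ {t}) x u' ∧ Reach ends (A \ {t}) u y) := by
  induction h with
  | refl => exact Or.inl Relation.ReflTransGen.refl
  | @tail b c hxb step ih =>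
    obtain ⟨f, hfA, hfe⟩ := step
    by_cases hft : f = t
    · subst hft
      have hbc : (b = u ∧ c = u') ∨ (b = u' ∧ c = u) := by
        have := htends.symm.trans hfe
        exact Sym2.eq_iff.mp this.symm
      rcases hbc with ⟨rfl, rfl⟩ | ⟨rfl, rfl⟩
      · rcases ih with h1 | ⟨h1, h2⟩ | ⟨h1, h2⟩
        · exact Or.inr (Or.inl ⟨h1, Relation.ReflTransGen.refl⟩)
        · exact Or.inr (Or.inl ⟨h1, Relation.ReflTransGen.refl⟩)
        · exact Or.inl h1
      · rcases ih with h1 | ⟨h1, h2⟩ | ⟨h1, h2⟩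
        · exact Or.inr (Or.inr ⟨h1, Relation.ReflTransGen.refl⟩)
        · exact Or.inl h1
        · exact Or.inr (Or.inr ⟨h1, Relation.ReflTransGen.refl⟩)
    · have hstep : ∃ g ∈ A \ {t}, ends g = s(b, c) := ⟨f, ⟨hfA, hft⟩, hfe⟩
      rcases ih with h1 | ⟨h1, h2⟩ | ⟨h1, h2⟩
      · exact Or.inl (h1.tail hstep)
      · exact Or.inr (Or.inl ⟨h1, h2.tail hstep⟩)
      · exact Or.inr (Or.inr ⟨h1, h2.tail hstep⟩)

lemma reach_insert_out {A : Set E} {g : E} {p q : V} (hg : ends g = s(p, q))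
    {x y : V} (h : Reach ends (A ∪ {g}) x y) :
    Reach ends A x y ∨ (Reach ends A x p ∧ Reach ends A q y) ∨
    (Reach ends A x q ∧ Reach ends A p y) := by
  have hsub : (A ∪ {g}) \ {g} ⊆ A := by
    rintro f ⟨hf | hf, hfn⟩
    · exact hf
    · exact absurd hf hfn
  rcases reach_remove ends hg h with h1 | ⟨h1, h2⟩ | ⟨h1, h2⟩
  · exact Or.inl (reach_mono ends hsub h1)
  · exact Or.inr (Or.inl ⟨reach_mono ends hsub h1, reach_mono ends hsub h2⟩)
  · exact Or.inr (Or.inr ⟨reach_mono ends hsub h1, reach_mono ends hsub h2⟩)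

lemma reach_avoid {A : Set E} {u x y : V} (h : Reach ends A x y)
    (hu : ¬ Reach ends A x u) :
    Reach ends {f | f ∈ A ∧ u ∉ ends f} x y := by
  induction h with
  | refl => exact Relation.ReflTransGen.refl
  | @tail b c hxb step ih =>
    obtain ⟨f, hfA, hfe⟩ := step
    have hub : u ∉ ends f := by
      intro hmem
      rw [hfe] at hmem
      rcases Sym2.mem_iff.mp hmem with h1 | h2
      · exact hu (by rw [h1]; exact hxb)
      · exact hu (by rw [h2]; exact hxb.tail ⟨f, hfA, hfe⟩)
    exact ih.tail ⟨f, ⟨hfA, hub⟩, hfe⟩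

lemma forest_mono {A B : Set E} (hB : B ⊆ A) (hA : IsForest ends A) : IsForest ends B := by
  intro f hf x y hxy hr
  exact hA f (hB hf) x y hxy
    (reach_mono ends (Set.diff_subset_diff_left hB) hr)

lemma forest_insert {A : Set E} (hA : IsForest ends A) {g : E} {p q : V}
    (hg : ends g = s(p, q)) (hpq : ¬ Reach ends A p q) :
    IsForest ends (A ∪ {g}) := by
  have hgA : g ∉ A := fun hgA => hpq (reach_step ends hgA hg)
  intro f hf x y hxy hr
  rcases hf with hfA | hfg
  · have hfg : f ≠ g := fun h => hgA (h ▸ hfA)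
    have hset : (A ∪ {g}) \ {f} = (A \ {f}) ∪ {g} := by
      ext a
      simp only [Set.mem_diff, Set.mem_union, Set.mem_singleton_iff]
      constructor
      · rintro ⟨ha | ha, hn⟩
        · exact Or.inl ⟨ha, hn⟩
        · exact Or.inr ha
      · rintro (⟨ha, hn⟩ | ha)
        · exact ⟨Or.inl ha, hn⟩
        · exact ⟨Or.inr ha, ha ▸ fun h => hfg (h ▸ rfl)⟩
    rw [hset] at hr
    rcases reach_insert_out ends hg hr with h1 | ⟨h1, h2⟩ | ⟨h1, h2⟩
    · exact hA f hfA x y hxy h1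
    · apply hpq
      have hxp : Reach ends A p x := reach_symm ends (reach_mono ends Set.diff_subset h1)
      have hxy' : Reach ends A x y := reach_step ends hfA hxy
      have hyq : Reach ends A y q := reach_symm ends (reach_mono ends Set.diff_subset h2)
      exact (hxp.trans hxy').trans hyq
    · apply hpq
      have hpy : Reach ends A p y := reach_mono ends Set.diff_subset h2
      have hyx : Reach ends A y x := reach_symm ends (reach_step ends hfA hxy)
      have hxq : Reach ends A x q := reach_mono ends Set.diff_subset h1
      exact (hpy.trans hyx).trans hxq
  · have hfg : f = g := hfg
    subst hfg
    have hsub : (A ∪ {f}) \ {f} ⊆ A := by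
      rintro a ⟨ha | ha, hn⟩
      · exact ha
      · exact absurd ha hn
    have hr' : Reach ends A x y := reach_mono ends hsub hr
    rcases Sym2.eq_iff.mp (hg.symm.trans hxy) with ⟨rfl, rfl⟩ | ⟨rfl, rfl⟩
    · exact hpq hr'
    · exact hpq (reach_symm ends hr')

end ExchangeAux

/-- **The exchange lemma.**  Let `T` be a spanning tree of `G` and `F` a forest on
`V(G)` edge-disjoint from `T`, let `u ≠ r`, let `u'` be the parent of `u` in `T`
(realized by the edge `t ∈ T`), and let `e = vv' ∈ F` be such that `(F + uu') − e`
contains no cycle.  Then the following are equivalent: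
(a) `(T − uu') + e` is a spanning tree of `G` and `(F − e) + uu'` is a forest;
(b) the edge `uu'` lies in the unique cycle of `T + e`;
(c) up to relabelling `v` as `v'`, `v` is a descendant of `u` in `T` and `v'` is not. -/
theorem exchange_tfae {V E : Type} [Fintype V] [Fintype E] (ends : E → Sym2 V)
    (hloop : Loopless ends)
    (T F : Set E) (hT : IsSpanningTree ends T) (hF : IsForest ends F)
    (hdisj : Disjoint T F)
    (r u u' v v' : V) (hur : u ≠ r)
    (t : E) (ht : t ∈ T) (htends : ends t = s(u, u'))
    (hparent : ¬ Reach ends (T \ {t}) u r)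
    (e : E) (he : e ∈ F) (heends : ends e = s(v, v'))
    (hnocyc : IsForest ends ((F ∪ {t}) \ {e})) :
    ((IsSpanningTree ends ((T \ {t}) ∪ {e}) ∧ IsForest ends ((F \ {e}) ∪ {t}))
        ↔ OnACycle ends (T ∪ {e}) t)
      ∧ (OnACycle ends (T ∪ {e}) t
        ↔ ∃ a b : V, ends e = s(a, b) ∧
            Descendant ends T r a u ∧ ¬ Descendant ends T r b u) := by
  classical
  -- basic exclusions
  have htF : t ∉ F := fun h => (Set.disjoint_left.mp hdisj ht) h
  have heT : e ∉ T := fun h => (Set.disjoint_left.mp hdisj h) he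
  have hte : e ≠ t := fun h => htF (h ▸ he)
  -- forest property of T at t
  have hforestTt : ¬ Reach ends (T \ {t}) u u' := hT.1 t ht u u' htends
  -- dichotomy of sides
  have dichot : ∀ x, Reach ends (T \ {t}) u x ∨ Reach ends (T \ {t}) u' x := by
    intro x
    rcases reach_remove ends htends (hT.2 u x) with h1 | ⟨h1, h2⟩ | ⟨h1, h2⟩
    · exact Or.inl h1
    · exact Or.inr h2
    · exact absurd h1 hforestTt
  have notboth : ∀ x, Reach ends (T \ {t}) u x → Reach ends (T \ {t}) u' x → False :=
    fun x h1 h2 => hforestTt (h1.trans (reach_symm ends h2))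
  have hru' : Reach ends (T \ {t}) u' r := (dichot r).resolve_left hparent
  -- Descendant characterization
  have hdesc : ∀ a, Descendant ends T r a u ↔ Reach ends (T \ {t}) u a := by
    intro a
    constructor
    · rintro (rfl | hnr)
      · exact Relation.ReflTransGen.refl
      · by_contra hnot
        have h2 : Reach ends (T \ {t}) u' a := (dichot a).resolve_left hnot
        have har : Reach ends (T \ {t}) a r := (reach_symm ends h2).trans hru'
        have hnau : ¬ Reach ends (T \ {t}) a u :=
          fun h => notboth a (reach_symm ends h) h2
        apply hnr
        refine reach_mono ends ?_ (reach_avoid ends har hnau)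
        rintro f ⟨⟨hf1, _⟩, hf2⟩
        exact ⟨hf1, hf2⟩
    · intro h
      refine Or.inr (fun hr => ?_)
      have hr' : Reach ends (T \ {t}) a r := by
        refine reach_mono ends ?_ hr
        rintro f ⟨hf1, hf2⟩
        refine ⟨hf1, fun hft => hf2 ?_⟩
        have : f = t := hft
        rw [this, htends]
        exact Sym2.mem_mk_left u u'
      exact hparent (h.trans hr')
  -- set identities
  have hsetT : (T ∪ {e}) \ {t} = (T \ {t}) ∪ {e} := by
    ext f
    simp only [Set.mem_diff, Set.mem_union, Set.mem_singleton_iff]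
    constructor
    · rintro ⟨hf | hf, hn⟩
      · exact Or.inl ⟨hf, hn⟩
      · exact Or.inr hf
    · rintro (⟨hf, hn⟩ | hf)
      · exact ⟨Or.inl hf, hn⟩
      · exact ⟨Or.inr hf, hf ▸ hte⟩
  have hsetF : (F ∪ {t}) \ {e} = (F \ {e}) ∪ {t} := by
    ext f
    simp only [Set.mem_diff, Set.mem_union, Set.mem_singleton_iff]
    constructor
    · rintro ⟨hf | hf, hn⟩
      · exact Or.inl ⟨hf, hn⟩
      · exact Or.inr hf
    · rintro (⟨hf, hn⟩ | hf)
      · exact ⟨Or.inl hf, hn⟩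
      · exact ⟨Or.inr hf, fun h => hte (h.symm.trans hf)⟩
  have hforestF : IsForest ends ((F \ {e}) ∪ {t}) := hsetF ▸ hnocyc
  -- (b) iff the bridge reach
  have hcyc_iff : OnACycle ends (T ∪ {e}) t ↔ Reach ends ((T \ {t}) ∪ {e}) u u' := by
    constructor
    · rintro ⟨-, a, b, hab, hr⟩
      rw [hsetT] at hr
      rcases Sym2.eq_iff.mp (htends.symm.trans hab) with ⟨rfl, rfl⟩ | ⟨rfl, rfl⟩
      · exact hr
      · exact reach_symm ends hr
    · intro hr
      exact ⟨Or.inl ht, u, u', htends, by rw [hsetT]; exact hr⟩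
  -- bridge iff side configuration
  have hbc : Reach ends ((T \ {t}) ∪ {e}) u u' ↔
      ((Reach ends (T \ {t}) u v ∧ ¬ Reach ends (T \ {t}) u v') ∨
       (Reach ends (T \ {t}) u v' ∧ ¬ Reach ends (T \ {t}) u v)) := by
    constructor
    · intro hr
      rcases reach_insert_out ends heends hr with h1 | ⟨h1, h2⟩ | ⟨h1, h2⟩
      · exact absurd h1 hforestTt
      · exact Or.inl ⟨h1, fun h => notboth v' h (reach_symm ends h2)⟩
      · exact Or.inr ⟨h1, fun h => notboth v h (reach_symm ends h2)⟩
    · have hstep : Reach ends ((T \ {t}) ∪ {e}) v v' :=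
        reach_step ends (Or.inr rfl) heends
      have hsub : T \ {t} ⊆ (T \ {t}) ∪ {e} := Set.subset_union_left
      rintro (⟨h1, h2⟩ | ⟨h1, h2⟩)
      · have h3 : Reach ends (T \ {t}) u' v' := (dichot v').resolve_left h2
        exact ((reach_mono ends hsub h1).trans hstep).trans
          (reach_symm ends (reach_mono ends hsub h3))
      · have h3 : Reach ends (T \ {t}) u' v := (dichot v).resolve_left h2
        exact ((reach_mono ends hsub h1).trans (reach_symm ends hstep)).trans
          (reach_symm ends (reach_mono ends hsub h3))
  -- the second iff
  have hsecond : OnACycle ends (T ∪ {e}) t ↔ ∃ a b : V, ends e = s(a, b) ∧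
      Descendant ends T r a u ∧ ¬ Descendant ends T r b u := by
    rw [hcyc_iff, hbc]
    constructor
    · rintro (⟨h1, h2⟩ | ⟨h1, h2⟩)
      · exact ⟨v, v', heends, (hdesc v).mpr h1, fun h => h2 ((hdesc v').mp h)⟩
      · exact ⟨v', v, by rw [heends, Sym2.eq_swap], (hdesc v').mpr h1,
          fun h => h2 ((hdesc v).mp h)⟩
    · rintro ⟨a, b, hab, h1, h2⟩
      rcases Sym2.eq_iff.mp (heends.symm.trans hab) with ⟨rfl, rfl⟩ | ⟨rfl, rfl⟩
      · exact Or.inl ⟨(hdesc v).mp h1, fun h => h2 ((hdesc v').mpr h)⟩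
      · exact Or.inr ⟨(hdesc v').mp h1, fun h => h2 ((hdesc v).mpr h)⟩
  refine ⟨?_, hsecond⟩
  constructor
  · rintro ⟨hST, -⟩
    exact hcyc_iff.mpr (hST.2 u u')
  · intro hcyc
    have hbridge : Reach ends ((T \ {t}) ∪ {e}) u u' := hcyc_iff.mp hcyc
    -- v and v' are on different sides, hence not connected in T \ {t}
    have hvv' : ¬ Reach ends (T \ {t}) v v' := by
      rcases hbc.mp hbridge with ⟨h1, h2⟩ | ⟨h1, h2⟩
      · exact fun h => h2 (h1.trans h)
      · exact fun h => h2 (h1.trans (reach_symm ends h))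
    have hsub : T \ {t} ⊆ (T \ {t}) ∪ {e} := Set.subset_union_left
    refine ⟨⟨?_, ?_⟩, hforestF⟩
    · exact forest_insert ends
        (forest_mono ends Set.diff_subset hT.1) heends hvv'
    · intro x y
      rcases reach_remove ends htends (hT.2 x y) with h1 | ⟨h1, h2⟩ | ⟨h1, h2⟩
      · exact reach_mono ends hsub h1
      · exact ((reach_mono ends hsub h1).trans hbridge).trans (reach_mono ends hsub h2)
      · exact ((reach_mono ends hsub h1).trans (reach_symm ends hbridge)).trans
          (reach_mono ends hsub h2)
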